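/- Let R be a valuation domain whose quotient field Q is countably generated as an R-module. Then R is slender if and only if R is not complete in the R-topology. -/

import Mathlib

open Pointwise

section Defs
universe u v
variable (R : Type u) [CommRing R]

/-- `U` is a pure submodule of its ambient module: `rU = U ∩ rM` for all `r`. -/
def IsPureSub {M : Type v} [AddCommGroup M] [Module R M] (U : Submodule R M) : Prop :=
  ∀ (r : R) (x : M), x ∈ U → (∃ m : M, r • m = x) → ∃ u ∈ U, r • u = x

/-- `U` is uniserial: its submodules are totally ordered by inclusion. -/
def IsUniserialSub {M : Type v} [AddCommGroup M] [Module R M] (U : Submodule R M) : Prop :=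
  ∀ A B : Submodule R ↥U, A ≤ B ∨ B ≤ A

/-- `U` is a direct summand of its ambient module. -/
def IsSummand {M : Type v} [AddCommGroup M] [Module R M] (U : Submodule R M) : Prop :=
  ∃ V : Submodule R M, IsCompl U V

/-- A (torsion-free) module is separable if every pure uniserial submodule is a summand. -/
def IsSeparableMod (M : Type v) [AddCommGroup M] [Module R M] : Prop :=
  ∀ U : Submodule R M, IsPureSub R U → IsUniserialSub R U → IsSummand R U

/-- `R/A` is complete in the `R/A`-topology: every coherent family of cosets
`(aᵢ + Bᵢ)` with `⋂ᵢ Bᵢ = A` has a common point. -/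
def IsCompleteQuot (A : Ideal R) : Prop :=
  ∀ (ι : Type u) (a : ι → R) (B : ι → Ideal R),
    (∀ i, A ≤ B i) → (∀ i j, B i ≤ B j → a i - a j ∈ B j) → (⨅ i, B i) = A →
    ∃ c : R, ∀ i, c - a i ∈ B i

/-- A valuation ring with maximal ideal `P` is maximal: `R/A` is complete in the
`R/A`-topology for every proper ideal `A` with `A ≠ Pa` for all nonzero `a`. -/
def IsMaximalVD (P : Ideal R) : Prop :=
  ∀ A : Ideal R, A ≠ ⊤ → (∀ a : R, a ≠ 0 → A ≠ Ideal.span {a} * P) → IsCompleteQuot R A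

/-- A module `M` is slender if every homomorphism `R^ℕ → M` kills almost all
standard unit vectors. -/
def IsSlender (M : Type v) [AddCommGroup M] [Module R M] : Prop :=
  ∀ f : ((ℕ → R) →ₗ[R] M), ∃ n₀ : ℕ, ∀ n ≥ n₀, f (Pi.single n 1) = 0

end Defs

section Stmt8Aux
universe u
variable {R : Type u} [CommRing R] [IsDomain R] [ValuationRing R]

private lemma exists_chain (hQ : ∃ S : Set (FractionRing R), S.Countable ∧ Submodule.span R S = ⊤) :
    ∃ r : ℕ → R, (∀ n, r n ≠ 0) ∧ (∀ n, r n ∣ r (n + 1)) ∧ (∀ a : R, a ≠ 0 → ∃ n, a ∣ r n) := by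
  classical
  obtain ⟨S, hc, hs⟩ := hQ
  have hne : S.Nonempty := by
    rcases S.eq_empty_or_nonempty with h | h
    · exfalso
      rw [h, Submodule.span_empty] at hs
      have : (1 : FractionRing R) ∈ (⊥ : Submodule R (FractionRing R)) := hs ▸ Submodule.mem_top
      rw [Submodule.mem_bot] at this
      exact one_ne_zero this
    · exact h
  obtain ⟨q, hq⟩ := hc.exists_eq_range hne
  have hsurj := fun n => IsLocalization.surj (nonZeroDivisors R) (q n)
  choose pr hpr using hsurj
  set A : R →+* FractionRing R := algebraMap R (FractionRing R) with hA
  refine ⟨fun n => ∏ i ∈ Finset.range (n + 1), ((pr i).2 : R), ?_, ?_, ?_⟩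
  · intro n
    rw [Finset.prod_ne_zero_iff]
    exact fun i _ => nonZeroDivisors.ne_zero (pr i).2.2
  · intro n
    exact ⟨((pr (n + 1)).2 : R), Finset.prod_range_succ (fun i => ((pr i).2 : R)) (n + 1)⟩
  · intro a ha
    have hAa : A a ≠ 0 := by
      simpa [hA] using (IsFractionRing.to_map_eq_zero_iff (K := FractionRing R)).not.mpr ha
    have hmem : (A a)⁻¹ ∈ Submodule.span R S := hs ▸ Submodule.mem_top
    rw [Submodule.mem_span_set'] at hmem
    obtain ⟨m, c, g, hg⟩ := hmem
    have hk : ∀ i : Fin m, ∃ k : ℕ, q k = (g i : FractionRing R) := by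
      intro i
      have h2 : (g i : FractionRing R) ∈ Set.range q := by rw [← hq]; exact (g i).2
      exact h2.imp fun k hk => hk
    choose k hkk using hk
    set N : ℕ := Finset.univ.sup k
    set rN : R := ∏ i ∈ Finset.range (N + 1), ((pr i).2 : R) with hrN
    have key : ∀ i : Fin m, ∃ t : R, (g i : FractionRing R) * A rN = A t := by
      intro i
      have hdvd : ((pr (k i)).2 : R) ∣ rN := by
        apply Finset.dvd_prod_of_mem
        simp only [Finset.mem_range]
        exact Nat.lt_succ_of_le (Finset.le_sup (Finset.mem_univ i))
      obtain ⟨w, hw⟩ := hdvd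
      refine ⟨(pr (k i)).1 * w, ?_⟩
      rw [hw, map_mul, map_mul, ← mul_assoc, ← hkk i, hpr (k i)]
    choose t ht using key
    refine ⟨N, ∑ i, c i * t i, ?_⟩
    have heq : (A a)⁻¹ * A rN = A (∑ i, c i * t i) := by
      rw [← hg, Finset.sum_mul, map_sum]
      refine Finset.sum_congr rfl fun i _ => ?_
      rw [smul_mul_assoc, ht i, Algebra.smul_def, map_mul]
    have h2 : A rN = A (a * ∑ i, c i * t i) := by
      rw [map_mul, ← heq, ← mul_assoc, mul_inv_cancel₀ hAa, one_mul]
    exact IsFractionRing.injective R (FractionRing R) h2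

omit [ValuationRing R] in
private lemma chain_dvd {r : ℕ → R} (h : ∀ n, r n ∣ r (n + 1)) {k j : ℕ} (hkj : k ≤ j) :
    r k ∣ r j := by
  induction j, hkj using Nat.le_induction with
  | base => exact dvd_rfl
  | succ n hn ih => exact ih.trans (h n)

private lemma exists_chain' (hF : ¬ IsField R)
    (hch : ∃ r : ℕ → R, (∀ n, r n ≠ 0) ∧ (∀ n, r n ∣ r (n + 1)) ∧ (∀ a : R, a ≠ 0 → ∃ n, a ∣ r n)) :
    ∃ r : ℕ → R, (∀ n, r n ≠ 0) ∧ (∀ n, r n ∣ r (n + 1)) ∧ (∀ a : R, a ≠ 0 → ∃ n, a ∣ r n) ∧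
      (∀ x : R, (∀ n, r n ∣ x) → x = 0) := by
  obtain ⟨a₀, ha₀, hu₀⟩ : ∃ a : R, a ≠ 0 ∧ ¬ IsUnit a := by
    by_contra h
    push_neg at h
    exact hF ⟨exists_pair_ne R, mul_comm, fun {a} ha => (h a ha).exists_right_inv⟩
  obtain ⟨r, h0, hsucc, hco⟩ := hch
  refine ⟨fun n => r n * a₀ ^ (n + 1), fun n => mul_ne_zero (h0 n) (pow_ne_zero _ ha₀),
    fun n => mul_dvd_mul (hsucc n) (pow_dvd_pow _ (by omega)), fun a ha => ?_, fun x hx => ?_⟩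
  · obtain ⟨n, hn⟩ := hco a ha
    exact ⟨n, hn.trans (dvd_mul_right _ _)⟩
  · by_contra hxne
    have hxx : x * x ≠ 0 := mul_ne_zero hxne hxne
    obtain ⟨n, hn⟩ := hco (x * x) hxx
    have h1 : x * x ∣ x := (hn.trans (dvd_mul_right _ _)).trans (hx n)
    obtain ⟨t, ht⟩ := h1
    have hxu : IsUnit x := by
      have : x * 1 = x * (x * t) := by rw [mul_one, ← mul_assoc, ← ht]
      exact IsUnit.of_mul_eq_one (a := x) t (mul_left_cancel₀ hxne this).symm
    have h2 : IsUnit (r 0 * a₀ ^ (0 + 1)) := isUnit_of_dvd_unit (hx 0) hxu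
    exact hu₀ (isUnit_of_dvd_unit (by simpa using dvd_mul_left a₀ (r 0)) h2)

private lemma bad_map_of_complete {r : ℕ → R} (h0 : ∀ n, r n ≠ 0) (hsucc : ∀ n, r n ∣ r (n + 1))
    (hH : ∀ x : R, (∀ n, r n ∣ x) → x = 0) (hC : IsCompleteQuot R ⊥) :
    ∃ f : ((ℕ → R) →ₗ[R] R), ∀ n, f (Pi.single n 1) = r n := by
  classical
  have hzero : ∀ y : R, (∀ k : ℕ, y ∈ Ideal.span {r k}) → y = 0 := fun y hy =>
    hH y fun n => Ideal.mem_span_singleton.mp (hy n)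
  have hlim : ∀ x : ℕ → R, ∃ c : R,
      ∀ k : ℕ, c - ∑ n ∈ Finset.range k, x n * r n ∈ Ideal.span {r k} := by
    intro x
    have hcoh : ∀ i j : ULift.{u} ℕ, Ideal.span {r i.down} ≤ Ideal.span {r j.down} →
        (∑ n ∈ Finset.range i.down, x n * r n) - ∑ n ∈ Finset.range j.down, x n * r n
          ∈ Ideal.span {r j.down} := by
      intro i j hij
      rcases le_total i.down j.down with h | h
      · have hd : r j.down ∣ r i.down :=
          (Ideal.span_singleton_le_span_singleton).mp hij
        rw [show (∑ n ∈ Finset.range i.down, x n * r n) - ∑ n ∈ Finset.range j.down, x n * r n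
            = -(∑ n ∈ Finset.Ico i.down j.down, x n * r n) by
          rw [Finset.sum_Ico_eq_sub _ h]; ring]
        refine neg_mem (Submodule.sum_mem _ fun n hn => ?_)
        rw [Finset.mem_Ico] at hn
        exact Ideal.mem_span_singleton.mpr
          ((hd.trans (chain_dvd hsucc hn.1)).mul_left _)
      · rw [show (∑ n ∈ Finset.range i.down, x n * r n) - ∑ n ∈ Finset.range j.down, x n * r n
            = ∑ n ∈ Finset.Ico j.down i.down, x n * r n by
          rw [Finset.sum_Ico_eq_sub _ h]]
        refine Submodule.sum_mem _ fun n hn => ?_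
        rw [Finset.mem_Ico] at hn
        exact Ideal.mem_span_singleton.mpr ((chain_dvd hsucc hn.1).mul_left _)
    have hinf : (⨅ k : ULift.{u} ℕ, Ideal.span {r k.down}) = (⊥ : Ideal R) := by
      rw [eq_bot_iff]
      intro y hy
      rw [Ideal.mem_iInf] at hy
      exact (Submodule.mem_bot R).mpr (hzero y fun k => hy (ULift.up k))
    obtain ⟨c, hc⟩ := hC (ULift.{u} ℕ)
      (fun k => ∑ n ∈ Finset.range k.down, x n * r n)
      (fun k => Ideal.span {r k.down}) (fun _ => bot_le) hcoh hinf
    exact ⟨c, fun k => hc (ULift.up k)⟩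
  choose F hF using hlim
  have hadd : ∀ x y : ℕ → R, F (x + y) = F x + F y := by
    intro x y
    rw [← sub_eq_zero]
    apply hzero
    intro k
    have hs : ∑ n ∈ Finset.range k, (x + y) n * r n =
        (∑ n ∈ Finset.range k, x n * r n) + ∑ n ∈ Finset.range k, y n * r n := by
      rw [← Finset.sum_add_distrib]
      exact Finset.sum_congr rfl fun n _ => by simp [add_mul]
    have he : F (x + y) - (F x + F y) =
        (F (x + y) - ∑ n ∈ Finset.range k, (x + y) n * r n)
        - (F x - ∑ n ∈ Finset.range k, x n * r n)
        - (F y - ∑ n ∈ Finset.range k, y n * r n) := by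
      rw [hs]; ring
    rw [he]
    exact Submodule.sub_mem _ (Submodule.sub_mem _ (hF (x + y) k) (hF x k)) (hF y k)
  have hsmul : ∀ (c : R) (x : ℕ → R), F (c • x) = c * F x := by
    intro c x
    rw [← sub_eq_zero]
    apply hzero
    intro k
    have hs : ∑ n ∈ Finset.range k, (c • x) n * r n =
        c * ∑ n ∈ Finset.range k, x n * r n := by
      rw [Finset.mul_sum]
      exact Finset.sum_congr rfl fun n _ => by simp [mul_assoc]
    have he : F (c • x) - c * F x =
        (F (c • x) - ∑ n ∈ Finset.range k, (c • x) n * r n)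
        - c * (F x - ∑ n ∈ Finset.range k, x n * r n) := by
      rw [hs]; ring
    rw [he]
    exact Submodule.sub_mem _ (hF (c • x) k) (Ideal.mul_mem_left _ _ (hF x k))
  refine ⟨{ toFun := F, map_add' := hadd, map_smul' := hsmul }, ?_⟩
  intro n
  show F (Pi.single n 1) = r n
  rw [← sub_eq_zero]
  apply hzero
  intro k
  set K := max k (n + 1) with hK
  have hS : ∑ m ∈ Finset.range K, (Pi.single n (1 : R) : ℕ → R) m * r m = r n := by
    have : ∀ m ∈ Finset.range K, (Pi.single n (1 : R) : ℕ → R) m * r m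
        = if m = n then r m else 0 := by
      intro m _
      rw [Pi.single_apply]
      split <;> simp
    rw [Finset.sum_congr rfl this, Finset.sum_ite_eq' (Finset.range K) n (fun m => r m),
      if_pos (Finset.mem_range.mpr (lt_of_lt_of_le (Nat.lt_succ_self n) (le_max_right _ _)))]
  have := hF (Pi.single n 1) K
  rw [hS] at this
  exact Ideal.span_singleton_le_span_singleton.mpr (chain_dvd hsucc (le_max_left k (n + 1))) this

private lemma complete_of_bad_map {r : ℕ → R} (h0 : ∀ n, r n ≠ 0) (hsucc : ∀ n, r n ∣ r (n + 1))
    (hH : ∀ x : R, (∀ n, r n ∣ x) → x = 0)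
    (f : (ℕ → R) →ₗ[R] R) (hf : ∀ n₀ : ℕ, ∃ n, n₀ ≤ n ∧ f (Pi.single n 1) ≠ 0) :
    IsCompleteQuot R ⊥ := by
  classical
  have hzero : ∀ y : R, (∀ k : ℕ, y ∈ Ideal.span {r k}) → y = 0 := fun y hy =>
    hH y fun n => Ideal.mem_span_singleton.mp (hy n)
  choose g hg1 hg2 using hf
  set ν : ℕ → ℕ := fun k => Nat.rec (g 0) (fun _ m => g (m + 1)) k with hνdef
  have hνs : ∀ k, ν (k + 1) = g (ν k + 1) := fun k => rfl
  have hνmono : StrictMono ν := strictMono_nat_of_lt_succ fun k => by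
    rw [hνs]; exact lt_of_lt_of_le (Nat.lt_succ_self _) (hg1 (ν k + 1))
  set u : ℕ → R := fun k => f (Pi.single (ν k) 1) with hudef
  have hu : ∀ k, u k ≠ 0 := by
    intro k
    cases k with
    | zero => exact hg2 0
    | succ k => exact hg2 (ν k + 1)
  set w : ℕ → R := fun k => r k * ∏ i ∈ Finset.range k, u i with hwdef
  set c : ℕ → R := fun k => u k * w k with hcdef
  have hck : ∀ k, c k = r k * ∏ i ∈ Finset.range (k + 1), u i := by
    intro k
    rw [hcdef, hwdef]
    simp only [Finset.prod_range_succ]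
    ring
  have hc0 : ∀ k, c k ≠ 0 := by
    intro k
    rw [hck]
    exact mul_ne_zero (h0 k) (Finset.prod_ne_zero_iff.mpr fun i _ => hu i)
  have hcsucc : ∀ k, c k ∣ c (k + 1) := by
    intro k
    rw [hck k, hck (k + 1)]
    refine mul_dvd_mul (hsucc k) ?_
    rw [Finset.prod_range_succ (n := k + 1)]
    exact dvd_mul_right _ _
  have hrc : ∀ k, r k ∣ c k := fun k => (hck k) ▸ dvd_mul_right _ _
  have hrw : ∀ {K k : ℕ}, K ≤ k → r K ∣ w k := fun {K k} hKk =>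
    (chain_dvd hsucc hKk).trans (dvd_mul_right _ _)
  intro ι a B hB hcoh hinf
  have htot : ∀ I J : Ideal R, I ≤ J ∨ J ≤ I := fun I J =>
    (ValuationRing.le_total_ideal (A := R)).total I J
  have hpick : ∀ k : ℕ, ∃ i : ι, B i ≤ Ideal.span {c k} := by
    intro k
    have h1 : ∃ i, c k ∉ B i := by
      by_contra h
      push_neg at h
      have h2 : c k ∈ ⨅ i, B i := Ideal.mem_iInf.mpr h
      rw [hinf] at h2
      exact hc0 k ((Submodule.mem_bot R).mp h2)
    obtain ⟨i, hi⟩ := h1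
    rcases htot (B i) (Ideal.span {c k}) with h | h
    · exact ⟨i, h⟩
    · exact absurd (h (Ideal.mem_span_singleton_self _)) hi
  choose idx hidx using hpick
  have hd : ∀ k : ℕ, ∃ t : R, a (idx (k + 1)) - a (idx k) = c k * t := by
    intro k
    have hmem : a (idx (k + 1)) - a (idx k) ∈ Ideal.span {c k} := by
      rcases htot (B (idx k)) (B (idx (k + 1))) with h | h
      · have h1 := hcoh _ _ h
        have h2 : a (idx k) - a (idx (k + 1)) ∈ Ideal.span {c k} :=
          ((hidx (k + 1)).trans
            (Ideal.span_singleton_le_span_singleton.mpr (hcsucc k))) h1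
        simpa using neg_mem h2
      · exact (hidx k) (hcoh _ _ h)
    obtain ⟨t, ht⟩ := Ideal.mem_span_singleton.mp hmem
    exact ⟨t, ht⟩
  choose t ht using hd
  set x : ℕ → R := fun m => if h : ∃ k, ν k = m then w h.choose * t h.choose else 0
    with hxdef
  have hx1 : ∀ k, x (ν k) = w k * t k := by
    intro k
    have hex : ∃ k', ν k' = ν k := ⟨k, rfl⟩
    rw [hxdef]
    simp only [dif_pos hex]
    have hck' : hex.choose = k := hνmono.injective hex.choose_spec
    rw [hck']
  have hx0 : ∀ m, (¬ ∃ k, ν k = m) → x m = 0 := by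
    intro m hm
    rw [hxdef]
    simp only [dif_neg hm]
  have hkey : ∀ K : ℕ, f x - (a (idx K) - a (idx 0)) ∈ Ideal.span {r K} := by
    intro K
    set xfin : ℕ → R :=
      ∑ k ∈ Finset.range K, (w k * t k) • (Pi.single (ν k) (1 : R) : ℕ → R)
      with hxfin
    have hfxfin : f xfin = a (idx K) - a (idx 0) := by
      rw [hxfin, map_sum, ← Finset.sum_range_sub (fun k => a (idx k)) K]
      refine Finset.sum_congr rfl fun k _ => ?_
      rw [map_smul, smul_eq_mul, ht k, hcdef]
      ring
    have hxfinν : ∀ k : ℕ, xfin (ν k) = if k < K then w k * t k else 0 := by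
      intro k
      rw [hxfin, Finset.sum_apply]
      have hterm : ∀ k' ∈ Finset.range K,
          ((w k' * t k') • (Pi.single (ν k') (1 : R) : ℕ → R)) (ν k)
            = if k' = k then w k' * t k' else 0 := by
        intro k' _
        rw [Pi.smul_apply, Pi.single_apply, smul_eq_mul]
        by_cases h : k' = k
        · rw [if_pos h, if_pos (by rw [h]), mul_one]
        · rw [if_neg h, if_neg fun hh => h (hνmono.injective hh).symm, mul_zero]
      rw [Finset.sum_congr rfl hterm,
        Finset.sum_ite_eq' (Finset.range K) k fun k' => w k' * t k']
      simp [Finset.mem_range]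
    have hxfin0 : ∀ m, (¬ ∃ k, ν k = m) → xfin m = 0 := by
      intro m hm
      rw [hxfin, Finset.sum_apply]
      refine Finset.sum_eq_zero fun k' _ => ?_
      rw [Pi.smul_apply, Pi.single_apply, if_neg fun hh => hm ⟨k', hh.symm⟩, smul_zero]
    have hy : ∀ m, r K ∣ x m - xfin m := by
      intro m
      by_cases hex : ∃ k, ν k = m
      · obtain ⟨k, rfl⟩ := hex
        rw [hx1 k, hxfinν k]
        by_cases hk : k < K
        · rw [if_pos hk, sub_self]
          exact dvd_zero _
        · rw [if_neg hk, sub_zero]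
          exact (hrw (le_of_not_gt hk)).mul_right _
      · rw [hx0 m hex, hxfin0 m hex, sub_self]
        exact dvd_zero _
    choose z hz using hy
    have hxsplit : x = xfin + r K • z := by
      funext m
      have := hz m
      simp only [Pi.add_apply, Pi.smul_apply, smul_eq_mul]
      linear_combination this
    have he : f x - (a (idx K) - a (idx 0)) = r K * f z := by
      rw [hxsplit, map_add, map_smul, hfxfin, smul_eq_mul]
      ring
    rw [he]
    exact Ideal.mem_span_singleton.mpr (dvd_mul_right _ _)
  have h1 : ∀ K : ℕ, a (idx 0) + f x - a (idx K) ∈ Ideal.span {r K} := by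
    intro K
    have he : a (idx 0) + f x - a (idx K) = f x - (a (idx K) - a (idx 0)) := by ring
    rw [he]
    exact hkey K
  refine ⟨a (idx 0) + f x, fun j => ?_⟩
  have hBc : ∀ K, B (idx K) ≤ Ideal.span {r K} := fun K =>
    (hidx K).trans (Ideal.span_singleton_le_span_singleton.mpr (hrc K))
  by_cases hj : ∃ K, Ideal.span {r K} ≤ B j
  · obtain ⟨K, hK⟩ := hj
    have h2 : a (idx K) - a j ∈ B j := hcoh _ _ ((hBc K).trans hK)
    have he : a (idx 0) + f x - a j = (a (idx 0) + f x - a (idx K)) + (a (idx K) - a j) := by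
      ring
    rw [he]
    exact add_mem (hK (h1 K)) h2
  · push_neg at hj
    have hBj : ∀ K, B j ≤ Ideal.span {r K} := fun K => (hj K).le
    have hdiff : ∀ K, a (idx 0) + f x - a j ∈ Ideal.span {r K} := by
      intro K
      have he : a (idx 0) + f x - a j = (a (idx 0) + f x - a (idx K)) + (a (idx K) - a j) := by
        ring
      rw [he]
      refine add_mem (h1 K) ?_
      rcases htot (B j) (B (idx K)) with h | h
      · have h3 : a j - a (idx K) ∈ Ideal.span {r K} := (hBc K) (hcoh _ _ h)
        simpa using neg_mem h3
      · exact (hBj K) (hcoh _ _ h)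
    have hfin : a (idx 0) + f x - a j = 0 := hzero _ hdiff
    rw [hfin]
    exact zero_mem _

omit [ValuationRing R] in
private lemma field_complete (hF : IsField R) : IsCompleteQuot R ⊥ := by
  intro ι a B hB hcoh hinf
  have hex : ∃ i, B i ≠ ⊤ := by
    by_contra h
    push_neg at h
    have : (1 : R) ∈ ⨅ i, B i := Ideal.mem_iInf.mpr fun i => (h i) ▸ Submodule.mem_top
    rw [hinf] at this
    exact one_ne_zero ((Submodule.mem_bot R).mp this)
  obtain ⟨i₀, hi₀⟩ := hex
  have hbot : B i₀ = ⊥ := by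
    rw [eq_bot_iff]
    intro y hy
    rcases eq_or_ne y 0 with h | h
    · simp [h]
    · exfalso
      obtain ⟨z, hz⟩ := hF.mul_inv_cancel h
      exact hi₀ (Ideal.eq_top_of_isUnit_mem _ hy (IsUnit.of_mul_eq_one _ hz))
  exact ⟨a i₀, fun i => hcoh i₀ i (hbot ▸ bot_le)⟩

omit [IsDomain R] [ValuationRing R] in
private lemma field_bad_map (hF : IsField R) :
    ∃ f : ((ℕ → R) →ₗ[R] R), ∀ n, f (Pi.single n 1) = 1 := by
  letI : Field R := hF.toField
  set e : (ℕ →₀ R) →ₗ[R] (ℕ → R) := Finsupp.lcoeFun with he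
  have hinj : Function.Injective e := fun p q h => DFunLike.coe_injective h
  set E : (ℕ →₀ R) ≃ₗ[R] LinearMap.range e := LinearEquiv.ofInjective e hinj with hE
  set g : (LinearMap.range e : Submodule R (ℕ → R)) →ₗ[R] R :=
    (Finsupp.linearCombination R (fun _ : ℕ => (1 : R))).comp (E.symm : _ →ₗ[R] (ℕ →₀ R))
    with hg
  obtain ⟨f, hf⟩ := LinearMap.exists_extend g
  refine ⟨f, fun n => ?_⟩
  have hmem : (Pi.single n (1 : R) : ℕ → R) = e (Finsupp.single n 1) := by
    funext m
    simp [he, Finsupp.lcoeFun, Finsupp.single_apply, Pi.single_apply, eq_comm]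
  have h1 : f (Pi.single n 1) = g ⟨e (Finsupp.single n 1), LinearMap.mem_range_self _ _⟩ := by
    rw [← hf]
    simp only [LinearMap.comp_apply, Submodule.subtype_apply]
    rw [hmem]
  rw [h1, hg]
  simp only [LinearMap.comp_apply, LinearEquiv.coe_coe]
  have h2 : (⟨e (Finsupp.single n 1), LinearMap.mem_range_self _ _⟩ :
      LinearMap.range e) = E (Finsupp.single n 1) := rfl
  rw [h2, LinearEquiv.symm_apply_apply]
  simp [Finsupp.linearCombination_single]

end Stmt8Aux


/-- if the quotient field `Q` of the valuation domain `R` is countably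
generated as an `R`-module, then `R` is slender iff `R` is not complete in the
`R`-topology. -/
theorem stmt_8 {R : Type u} [CommRing R] [IsDomain R] [ValuationRing R]
    (hQ : ∃ S : Set (FractionRing R), S.Countable ∧ Submodule.span R S = ⊤) :
    IsSlender R R ↔ ¬ IsCompleteQuot R ⊥ := by
  constructor
  · intro hS hC
    by_cases hF : IsField R
    · obtain ⟨f, hf⟩ := field_bad_map hF
      obtain ⟨n₀, hn₀⟩ := hS f
      exact one_ne_zero ((hf n₀) ▸ hn₀ n₀ le_rfl)
    · obtain ⟨r, h0, hsucc, hco, hH⟩ := exists_chain' hF (exists_chain hQ)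
      obtain ⟨f, hf⟩ := bad_map_of_complete h0 hsucc hH hC
      obtain ⟨n₀, hn₀⟩ := hS f
      exact h0 n₀ ((hf n₀) ▸ hn₀ n₀ le_rfl)
  · intro hC f
    by_contra hbad
    push_neg at hbad
    by_cases hF : IsField R
    · exact hC (field_complete hF)
    · obtain ⟨r, h0, hsucc, hco, hH⟩ := exists_chain' hF (exists_chain hQ)
      exact hC (complete_of_bad_map h0 hsucc hH f hbad)
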